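/- For α ∈ (0,1)∪(1,∞), the power (Tsallis) score g_{α,PW}(x,r) = (α/(α−1)) r(x)^{α−1} − ‖r‖_α^α is a proper scoring rule: for every probability distribution p on a finite set X and every distribution r on X, E^p[g_{α,PW}(X,p)] ≥ E^p[g_{α,PW}(X,r)], and consequently max_r E^p[g_{α,PW}(X,r)] = (1/(α−1)) Σ_x p(x)^α. -/

import Mathlib

open BigOperators

/-- `p` is a probability distribution on the finite set `X`. -/
def IsDist {X : Type*} [Fintype X] (p : X → ℝ) : Prop :=
  (∀ x, 0 ≤ p x) ∧ ∑ x, p x = 1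

/-- Pointwise tangent-line inequality for `t ↦ t^α`. -/
lemma power_score_key (α p r : ℝ) (hα0 : 0 < α) (hα1 : α ≠ 1) (hp : 0 ≤ p) (hr : 0 ≤ r)
    (hr' : α < 1 → 0 < r) :
    α / (α - 1) * p * r ^ (α - 1) - r ^ α ≤ 1 / (α - 1) * p ^ α := by
  have hne : α - 1 ≠ 0 := sub_ne_zero.mpr hα1
  have hane : α ≠ 0 := ne_of_gt hα0
  have hPnn : 0 ≤ p ^ α := Real.rpow_nonneg hp α
  rcases lt_or_gt_of_ne hα1 with h | h
  · have hrpos := hr' h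
    have hg := Real.geom_mean_le_arith_mean2_weighted hα0.le
      (by linarith : (0:ℝ) ≤ 1 - α) hp hr (by ring)
    have hr1 : r ^ (1 - α) * r ^ (α - 1) = 1 := by
      rw [← Real.rpow_add hrpos]; norm_num
    have hrpow : r * r ^ (α - 1) = r ^ α := by
      nth_rewrite 1 [← Real.rpow_one r]
      rw [← Real.rpow_add hrpos]; ring_nf
    have h1 : p ^ α ≤ α * p * r ^ (α - 1) + (1 - α) * r ^ α := by
      calc p ^ α = (p ^ α * r ^ (1 - α)) * r ^ (α - 1) := by
            rw [mul_assoc, hr1, mul_one]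
        _ ≤ (α * p + (1 - α) * r) * r ^ (α - 1) :=
            mul_le_mul_of_nonneg_right hg (Real.rpow_nonneg hrpos.le _)
        _ = α * p * r ^ (α - 1) + (1 - α) * (r * r ^ (α - 1)) := by ring
        _ = α * p * r ^ (α - 1) + (1 - α) * r ^ α := by rw [hrpow]
    have hc : 1 / (α - 1) ≤ 0 :=
      div_nonpos_of_nonneg_of_nonpos (by norm_num) (by linarith)
    have h2 := mul_le_mul_of_nonpos_left h1 hc
    have e : 1 / (α - 1) * (α * p * r ^ (α - 1) + (1 - α) * r ^ α)
        = α / (α - 1) * p * r ^ (α - 1) - r ^ α := by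
      field_simp [hne]
      ring
    linarith [e ▸ h2]
  · rcases eq_or_lt_of_le hr with hr0 | hrpos
    · rw [← hr0, Real.zero_rpow (by intro hc; apply hα1; linarith [sub_eq_zero.mp hc]),
        Real.zero_rpow (ne_of_gt hα0)]
      have hc : 0 < 1 / (α - 1) := one_div_pos.mpr (by linarith)
      nlinarith [mul_nonneg hc.le hPnn]
    · have hg := Real.geom_mean_le_arith_mean2_weighted
        (le_of_lt (by positivity : (0:ℝ) < 1 / α))
        (by rw [sub_nonneg, div_le_one hα0]; linarith : (0:ℝ) ≤ 1 - 1 / α)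
        hPnn (Real.rpow_nonneg hrpos.le α) (by field_simp; ring)
      have e1 : (p ^ α) ^ (1 / α) = p := by
        rw [one_div, Real.rpow_rpow_inv hp (ne_of_gt hα0)]
      have e2 : (r ^ α) ^ (1 - 1 / α) = r ^ (α - 1) := by
        rw [← Real.rpow_mul hrpos.le]
        congr 1
        field_simp
      rw [e1, e2] at hg
      -- hg : p * r ^ (α - 1) ≤ 1 / α * p ^ α + (1 - 1 / α) * r ^ α
      have hc : 0 < α / (α - 1) := by
        apply div_pos hα0; linarith
      have h2 := mul_le_mul_of_nonneg_left hg hc.le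
      have e : α / (α - 1) * (1 / α * p ^ α + (1 - 1 / α) * r ^ α)
          = 1 / (α - 1) * p ^ α + r ^ α := by
        field_simp [hne]
      rw [e] at h2
      linarith [h2]

theorem power_score_proper_and_max {X : Type*} [Fintype X] [Nonempty X]
    (α : ℝ) (hα0 : 0 < α) (hα1 : α ≠ 1)
    (p : X → ℝ) (hp : IsDist p) (hps : α < 1 → ∀ x, 0 < p x) :
    (∀ r : X → ℝ, IsDist r → (α < 1 → ∀ x, 0 < r x) →
      ∑ x, p x * (α / (α - 1) * r x ^ (α - 1) - ∑ x', r x' ^ α)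
        ≤ ∑ x, p x * (α / (α - 1) * p x ^ (α - 1) - ∑ x', p x' ^ α)) ∧
    IsGreatest {v : ℝ | ∃ r : X → ℝ, IsDist r ∧ (α < 1 → ∀ x, 0 < r x) ∧
        v = ∑ x, p x * (α / (α - 1) * r x ^ (α - 1) - ∑ x', r x' ^ α)}
      (1 / (α - 1) * ∑ x, p x ^ α) := by
  obtain ⟨hp0, hp1⟩ := hp
  -- value of expected gain at r = p
  have hEp : ∑ x, p x * (α / (α - 1) * p x ^ (α - 1) - ∑ x', p x' ^ α)
      = 1 / (α - 1) * ∑ x, p x ^ α := by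
    have hpt : ∀ x : X, p x * (α / (α - 1) * p x ^ (α - 1) - ∑ x', p x' ^ α)
        = α / (α - 1) * p x ^ α - p x * ∑ x', p x' ^ α := by
      intro x
      rcases eq_or_lt_of_le (hp0 x) with h0 | h0
      · rw [← h0, Real.zero_rpow (ne_of_gt hα0)]; ring
      · have : p x * p x ^ (α - 1) = p x ^ α := by
          nth_rewrite 1 [← Real.rpow_one (p x)]
          rw [← Real.rpow_add h0]; ring_nf
        rw [mul_sub, ← mul_assoc, mul_comm (p x) (α / (α - 1)), mul_assoc, this]
    rw [Finset.sum_congr rfl (fun x _ => hpt x), Finset.sum_sub_distrib,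
      ← Finset.mul_sum, ← Finset.sum_mul, hp1, one_mul]
    have hne : α - 1 ≠ 0 := sub_ne_zero.mpr hα1
    field_simp [hne]
    ring
  -- the main bound
  have hmain : ∀ r : X → ℝ, IsDist r → (α < 1 → ∀ x, 0 < r x) →
      ∑ x, p x * (α / (α - 1) * r x ^ (α - 1) - ∑ x', r x' ^ α)
        ≤ 1 / (α - 1) * ∑ x, p x ^ α := by
    intro r hr hr'
    have expand : ∑ x, p x * (α / (α - 1) * r x ^ (α - 1) - ∑ x', r x' ^ α)
        = ∑ x, (α / (α - 1) * p x * r x ^ (α - 1) - r x ^ α) := by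
      simp only [mul_sub]
      rw [Finset.sum_sub_distrib, Finset.sum_sub_distrib, ← Finset.sum_mul, hp1, one_mul]
      congr 1
      exact Finset.sum_congr rfl (fun x _ => by ring)
    rw [expand, Finset.mul_sum]
    exact Finset.sum_le_sum fun x _ =>
      power_score_key α (p x) (r x) hα0 hα1 (hp0 x) (hr.1 x) (fun h => hr' h x)
  refine ⟨fun r hr hr' => by rw [hEp]; exact hmain r hr hr', ?_, ?_⟩
  · exact ⟨p, ⟨hp0, hp1⟩, hps, hEp.symm⟩
  · rintro v ⟨r, hr, hr', rfl⟩
    exact hmain r hr hr'
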